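/- Let Γ be a countable discrete group and let Hₙ, H ≤ Γ be subgroups with Hₙ → H in the Chabauty topology. If (xₙ) is a norm-bounded sequence with xₙ ∈ L(Hₙ) for all n and xₙ → x in the weak operator topology on B(ℓ²(Γ)), then x ∈ L(H). -/

import Mathlib

open scoped InnerProductSpace ComplexOrder ENNReal
open ContinuousLinearMap

noncomputable section

/-- A group `G` is amenable if there is a left-translation-invariant state (invariant mean)
on the algebra `ℓ^∞(G)` of bounded complex functions on `G`. -/
def HasInvariantMean (G : Type*) [Group G] : Prop :=
  ∃ m : lp (fun _ : G => ℂ) ∞ →ₗ[ℂ] ℂ,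
    m 1 = 1 ∧
    (∀ f : lp (fun _ : G => ℂ) ∞, 0 ≤ m (star f * f)) ∧
    ∀ (g : G) (f₁ f₂ : lp (fun _ : G => ℂ) ∞), (∀ x : G, f₂ x = f₁ (g * x)) → m f₂ = m f₁

variable {Γ : Type*} [Group Γ] [Countable Γ]
variable {H : Type*} [NormedAddCommGroup H] [InnerProductSpace ℂ H] [CompleteSpace H]

/-- A state on `B(H)`: a positive linear functional taking the value `1` at the unit. -/
def IsStateB (φ : (H →L[ℂ] H) →ₗ[ℂ] ℂ) : Prop :=
  φ 1 = 1 ∧ ∀ T : H →L[ℂ] H, 0 ≤ φ (adjoint T * T)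

/-- The group von Neumann algebra `L(Γ)`: the double commutant of the range of the left
regular representation `lam`. -/
def groupVN (lam : Γ → H →L[ℂ] H) : Set (H →L[ℂ] H) :=
  Set.centralizer (Set.centralizer (Set.range lam))

/-- For a subgroup `K ≤ Γ`, the von Neumann subalgebra `L(K)` of `L(Γ)` generated by
`{lam h : h ∈ K}`, realized as the double commutant. -/
def subgroupVN (lam : Γ → H →L[ℂ] H) (K : Subgroup Γ) : Set (H →L[ℂ] H) :=
  Set.centralizer (Set.centralizer (lam '' (K : Set Γ)))

/-- The canonical trace `τ₀(x) = ⟨x δ_e, δ_e⟩` on `L(Γ)`, where `δ_e = b 1`. -/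
def tau0 (b : HilbertBasis Γ ℂ H) : (H →L[ℂ] H) → ℂ :=
  fun x => ⟪(b 1 : H), x (b 1)⟫_ℂ

/-- An `(M, τ₀)`-hypertrace: a state `φ` on `B(ℓ²(Γ))` with `φ|_{L(Γ)} = τ₀` and
`φ(mT) = φ(Tm)` for all `m ∈ M`, `T ∈ B(ℓ²(Γ))`. -/
def IsHypertrace (b : HilbertBasis Γ ℂ H) (lam : Γ → H →L[ℂ] H)
    (M : Set (H →L[ℂ] H)) (φ : (H →L[ℂ] H) →ₗ[ℂ] ℂ) : Prop :=
  IsStateB φ ∧ (∀ x ∈ groupVN lam, φ x = tau0 b x) ∧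
    ∀ m ∈ M, ∀ T : H →L[ℂ] H, φ (m * T) = φ (T * m)

set_option linter.unusedSectionVars false

section ChabautyAux

variable {Γ : Type*} [Group Γ]
variable {H : Type*} [NormedAddCommGroup H] [InnerProductSpace ℂ H] [CompleteSpace H]

private lemma clm_ext_basis (b : HilbertBasis Γ ℂ H) {F : Type*} [NormedAddCommGroup F]
    [NormedSpace ℂ F] {f g : H →L[ℂ] F} (h : ∀ t, f (b t) = g (b t)) : f = g := by
  refine ContinuousLinearMap.ext_on (s := Set.range ⇑b) ?_ ?_
  · rw [dense_iff_closure_eq, ← Submodule.topologicalClosure_coe, b.dense_span,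
      Submodule.top_coe]
  · rintro _ ⟨t, rfl⟩; exact h t

private lemma vec_ext_basis (b : HilbertBasis Γ ℂ H) {u w : H}
    (h : ∀ s, ⟪b s, u⟫_ℂ = ⟪b s, w⟫_ℂ) : u = w := by
  apply b.repr.injective
  ext s
  rw [b.repr_apply_apply, b.repr_apply_apply]
  exact h s

/-- Reindexed Hilbert basis `t ↦ b (t * g)`. -/
private def rbasis (b : HilbertBasis Γ ℂ H) (g : Γ) : HilbertBasis Γ ℂ H :=
  HilbertBasis.mk (b.orthonormal.comp (fun t => t * g) (Equiv.mulRight g).injective)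
    (by
      have h1 : Set.range (⇑b ∘ fun t => t * g) = Set.range ⇑b :=
        Function.Surjective.range_comp (Equiv.mulRight g).surjective ⇑b
      show ⊤ ≤ (Submodule.span ℂ (Set.range (⇑b ∘ fun t => t * g))).topologicalClosure
      rw [h1, b.dense_span])

private lemma rbasis_apply (b : HilbertBasis Γ ℂ H) (g t : Γ) :
    rbasis b g t = b (t * g) := by
  have : ⇑(rbasis b g) = fun t => b (t * g) := HilbertBasis.coe_mk _ _
  exact congrFun this t

/-- The right translation operator `b t ↦ b (t * g)`, as a linear isometry equivalence. -/
private def rhoE (b : HilbertBasis Γ ℂ H) (g : Γ) : H ≃ₗᵢ[ℂ] H :=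
  b.repr.trans (rbasis b g).repr.symm

/-- The right translation operator as a continuous linear map. -/
private def rho (b : HilbertBasis Γ ℂ H) (g : Γ) : H →L[ℂ] H :=
  ((rhoE b g).toContinuousLinearEquiv : H →L[ℂ] H)

private lemma rho_apply_eq (b : HilbertBasis Γ ℂ H) (g : Γ) (v : H) :
    rho b g v = rhoE b g v := rfl

private lemma rho_basis (b : HilbertBasis Γ ℂ H) (g t : Γ) :
    rho b g (b t) = b (t * g) := by
  classical
  rw [rho_apply_eq]
  show (rbasis b g).repr.symm (b.repr (b t)) = b (t * g)
  apply (rbasis b g).repr.injective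
  rw [(rbasis b g).repr.apply_symm_apply, b.repr_self, ← rbasis_apply b g t,
    (rbasis b g).repr_self]

private lemma rho_comm_lam (b : HilbertBasis Γ ℂ H) (lam : Γ → H →L[ℂ] H)
    (hlam : ∀ g t : Γ, lam g (b t) = b (g * t)) (h g : Γ) :
    lam h * rho b g = rho b g * lam h := by
  apply clm_ext_basis b
  intro t
  rw [ContinuousLinearMap.mul_apply, ContinuousLinearMap.mul_apply, rho_basis, hlam, hlam,
    rho_basis, mul_assoc]

private lemma rho_mul_inv (b : HilbertBasis Γ ℂ H) (g : Γ) :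
    rho b g * rho b g⁻¹ = 1 := by
  apply clm_ext_basis b
  intro t
  rw [ContinuousLinearMap.mul_apply, rho_basis, rho_basis, ContinuousLinearMap.one_apply,
    mul_assoc, inv_mul_cancel, mul_one]

private lemma rho_inner (b : HilbertBasis Γ ℂ H) (g : Γ) (ξ w : H) :
    ⟪ξ, rho b g w⟫_ℂ = ⟪rho b g⁻¹ ξ, w⟫_ℂ := by
  have h1 : rhoE b g (rho b g⁻¹ ξ) = ξ := by
    have := congrArg (fun f : H →L[ℂ] H => f ξ) (rho_mul_inv b g)
    simpa [ContinuousLinearMap.mul_apply, rho_apply_eq] using this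
  calc ⟪ξ, rho b g w⟫_ℂ = ⟪rhoE b g (rho b g⁻¹ ξ), rhoE b g w⟫_ℂ := by
        rw [h1, rho_apply_eq]
    _ = ⟪rho b g⁻¹ ξ, w⟫_ℂ := (rhoE b g).inner_map_map _ _

end ChabautyAux

/-- If `Kₙ → K` in the Chabauty topology on subgroups of `Γ` and `(xₙ)` is a
norm-bounded sequence with `xₙ ∈ L(Kₙ)` converging to `x` in the weak operator topology,
then `x ∈ L(K)`. -/
theorem chabauty_wo_limit_mem
    {Γ : Type*} [Group Γ] [Countable Γ]
    {H : Type*} [NormedAddCommGroup H] [InnerProductSpace ℂ H] [CompleteSpace H]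
    (b : HilbertBasis Γ ℂ H) (lam : Γ → H →L[ℂ] H)
    (hlam : ∀ g t : Γ, lam g (b t) = b (g * t))
    (hmul : ∀ g h : Γ, lam (g * h) = lam g * lam h)
    (hadj : ∀ g : Γ, adjoint (lam g) = lam g⁻¹)
    (K : ℕ → Subgroup Γ) (L : Subgroup Γ)
    (hconv : ∀ g : Γ, (g ∈ L → ∀ᶠ n in Filter.atTop, g ∈ K n) ∧
      (g ∉ L → ∀ᶠ n in Filter.atTop, g ∉ K n))
    (xs : ℕ → H →L[ℂ] H) (x : H →L[ℂ] H) (C : ℝ)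
    (hbdd : ∀ n, ‖xs n‖ ≤ C)
    (hmem : ∀ n, xs n ∈ subgroupVN lam (K n))
    (hwo : ∀ ξ η : H, Filter.Tendsto (fun n => ⟪ξ, xs n η⟫_ℂ) Filter.atTop (nhds ⟪ξ, x η⟫_ℂ)) :
    x ∈ subgroupVN lam L := by
  classical
  -- x commutes with every right translation
  have hrho_cent : ∀ (g : Γ) (S : Set Γ), rho b g ∈ Set.centralizer (lam '' S) := by
    rintro g S m ⟨h, _, rfl⟩
    exact rho_comm_lam b lam hlam h g
  have hn_rho : ∀ (n : ℕ) (g : Γ), rho b g * xs n = xs n * rho b g := fun n g =>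
    Set.mem_centralizer_iff.mp (hmem n) (rho b g) (hrho_cent g _)
  have hx_rho : ∀ (g : Γ) (η : H), x (rho b g η) = rho b g (x η) := by
    intro g η
    apply ext_inner_left ℂ
    intro ξ
    have t1 := hwo ξ (rho b g η)
    have t2 : Filter.Tendsto (fun n => ⟪ξ, xs n (rho b g η)⟫_ℂ) Filter.atTop
        (nhds ⟪ξ, rho b g (x η)⟫_ℂ) := by
      have heq : ∀ n, ⟪ξ, xs n (rho b g η)⟫_ℂ = ⟪rho b g⁻¹ ξ, xs n η⟫_ℂ := by
        intro n
        have h1 : xs n (rho b g η) = rho b g (xs n η) := by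
          have := congrArg (fun f : H →L[ℂ] H => f η) (hn_rho n g)
          simpa using this.symm
        rw [h1, rho_inner]
      rw [rho_inner]
      simp only [heq]
      exact hwo _ _
    exact tendsto_nhds_unique t1 t2
  -- Fourier coefficients of xs n vanish off K n
  have hsupp_n : ∀ (n : ℕ) (g : Γ), g ∉ K n → ⟪b g, xs n (b 1)⟫_ℂ = 0 := by
    intro n g hg
    set S : Submodule ℂ H := (Submodule.span ℂ (⇑b '' ((K n : Set Γ)))).topologicalClosure with hSdef
    haveI : CompleteSpace S := (Submodule.isClosed_topologicalClosure _).completeSpace_coe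
    have hbmem : ∀ k ∈ K n, b k ∈ S := fun k hk =>
      Submodule.le_topologicalClosure _ (Submodule.subset_span ⟨k, hk, rfl⟩)
    have hinv : ∀ h ∈ K n, ∀ v ∈ S, lam h v ∈ S := by
      intro h hh v hv
      have h1 : Submodule.map ((lam h : H →L[ℂ] H) : H →ₗ[ℂ] H)
          (Submodule.span ℂ (⇑b '' ((K n : Set Γ))))
          ≤ Submodule.span ℂ (⇑b '' ((K n : Set Γ))) := by
        rw [Submodule.map_span]
        apply Submodule.span_mono
        rintro _ ⟨_, ⟨k, hk, rfl⟩, rfl⟩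
        exact ⟨h * k, mul_mem hh hk, (hlam h k).symm⟩
      have h2 := Submodule.topologicalClosure_map (lam h)
        (Submodule.span ℂ (⇑b '' ((K n : Set Γ))))
      have h3 : Submodule.map ((lam h : H →L[ℂ] H) : H →ₗ[ℂ] H) S ≤ S :=
        h2.trans (Submodule.topologicalClosure_mono h1)
      exact h3 ⟨v, hv, rfl⟩
    set P : H →L[ℂ] H := S.subtypeL ∘L S.orthogonalProjectionOnto with hPdef
    have hPapply : ∀ v : H, P v = (S.orthogonalProjectionOnto v : H) := fun v => rfl
    have hPlam : ∀ h ∈ K n, lam h * P = P * lam h := by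
      intro h hh
      ext v
      show lam h (P v) = P (lam h v)
      symm
      rw [hPapply, hPapply]
      apply Submodule.eq_starProjection_of_mem_orthogonal
      · exact hinv h hh _ (S.orthogonalProjectionOnto v).2
      · rw [← map_sub]
        intro z hz
        rw [← ContinuousLinearMap.adjoint_inner_left, hadj]
        exact Submodule.sub_starProjection_mem_orthogonal v _ (hinv h⁻¹ (inv_mem hh) z hz)
    have hPmem : P ∈ Set.centralizer (lam '' ((K n : Set Γ))) := by
      rintro m ⟨h, hh, rfl⟩
      exact hPlam h hh
    have hcomm := Set.mem_centralizer_iff.mp (hmem n) P hPmem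
    have hb1 : P (b 1) = b 1 := by
      rw [hPapply]
      exact Submodule.eq_starProjection_of_mem_orthogonal (hbmem 1 (one_mem _)) (by simp)
    have hmemS : xs n (b 1) ∈ S := by
      have : xs n (b 1) = P (xs n (b 1)) := by
        conv_lhs => rw [← hb1]
        have := congrArg (fun f : H →L[ℂ] H => f (b 1)) hcomm
        simpa using this.symm
      rw [this, hPapply]
      exact (S.orthogonalProjectionOnto _).2
    have hker : S ≤ LinearMap.ker ((innerSL ℂ (b g) : H →L[ℂ] ℂ) : H →ₗ[ℂ] ℂ) := by
      apply Submodule.topologicalClosure_minimal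
      · rw [Submodule.span_le]
        rintro _ ⟨k, hk, rfl⟩
        have hgk : g ≠ k := fun h => hg (h ▸ hk)
        simp only [SetLike.mem_coe, LinearMap.mem_ker]
        simpa using b.orthonormal.2 hgk
      · exact ContinuousLinearMap.isClosed_ker _
    have hz := LinearMap.mem_ker.mp (hker hmemS)
    simpa using hz
  -- the Fourier coefficients of x
  set c : Γ → ℂ := fun k => ⟪b k, x (b 1)⟫_ℂ with hcdef
  have hcL : ∀ k : Γ, k ∉ L → c k = 0 := by
    intro k hk
    have t1 := hwo (b k) (b 1)
    have hev : ∀ᶠ n in Filter.atTop, ⟪b k, xs n (b 1)⟫_ℂ = 0 :=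
      ((hconv k).2 hk).mono fun n hn => hsupp_n n k hn
    have t2 : Filter.Tendsto (fun n => ⟪b k, xs n (b 1)⟫_ℂ) Filter.atTop (nhds 0) :=
      Filter.Tendsto.congr' (hev.mono fun n hn => hn.symm) tendsto_const_nhds
    exact tendsto_nhds_unique t1 t2
  have hcoef : ∀ s g : Γ, ⟪b s, x (b g)⟫_ℂ = c (s * g⁻¹) := by
    intro s g
    have h1 : b g = rho b g (b 1) := by rw [rho_basis, one_mul]
    rw [h1, hx_rho g (b 1), rho_inner, rho_basis]
  -- conclusion
  apply Set.mem_centralizer_iff.mpr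
  intro T hT
  apply clm_ext_basis b
  intro t
  rw [ContinuousLinearMap.mul_apply, ContinuousLinearMap.mul_apply]
  apply vec_ext_basis b
  intro s
  -- two HasSum computations
  have hs1 : HasSum (fun g : Γ => b.repr (T (b t)) g • ⟪b s, x (b g)⟫_ℂ)
      ⟪b s, x (T (b t))⟫_ℂ := by
    have := (b.hasSum_repr (T (b t))).mapL ((innerSL ℂ (b s)).comp x)
    simpa [map_smul] using this
  have hs2 : HasSum (fun g : Γ => b.repr (x (b t)) g • ⟪b s, T (b g)⟫_ℂ)
      ⟪b s, T (x (b t))⟫_ℂ := by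
    have := (b.hasSum_repr (x (b t))).mapL ((innerSL ℂ (b s)).comp T)
    simpa [map_smul] using this
  have hs1' : HasSum (fun k : Γ => ⟪b (k⁻¹ * s), T (b t)⟫_ℂ * c k)
      ⟪b s, x (T (b t))⟫_ℂ := by
    have h1 := (((Equiv.inv Γ).trans (Equiv.mulRight s)).hasSum_iff).mpr hs1
    have hfun : ((fun g : Γ => b.repr (T (b t)) g • ⟪b s, x (b g)⟫_ℂ)
        ∘ ((Equiv.inv Γ).trans (Equiv.mulRight s)))
        = fun k : Γ => ⟪b (k⁻¹ * s), T (b t)⟫_ℂ * c k := by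
      funext k
      simp only [Function.comp_apply, Equiv.coe_trans, Equiv.inv_apply, Equiv.coe_mulRight]
      rw [b.repr_apply_apply, hcoef, smul_eq_mul]
      have hk1 : s * (k⁻¹ * s)⁻¹ = k := by group
      rw [hk1]
    rwa [hfun] at h1
  have hs2' : HasSum (fun k : Γ => c k * ⟪b s, T (b (k * t))⟫_ℂ)
      ⟪b s, T (x (b t))⟫_ℂ := by
    have h2 := ((Equiv.mulRight t).hasSum_iff).mpr hs2
    have hfun : ((fun g : Γ => b.repr (x (b t)) g • ⟪b s, T (b g)⟫_ℂ)
        ∘ (Equiv.mulRight t))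
        = fun k : Γ => c k * ⟪b s, T (b (k * t))⟫_ℂ := by
      funext k
      simp only [Function.comp_apply, Equiv.coe_mulRight]
      rw [b.repr_apply_apply, hcoef, smul_eq_mul]
      have hk1 : k * t * t⁻¹ = k := by group
      rw [hk1]
    rwa [hfun] at h2
  have hterm : (fun k : Γ => ⟪b (k⁻¹ * s), T (b t)⟫_ℂ * c k)
      = fun k : Γ => c k * ⟪b s, T (b (k * t))⟫_ℂ := by
    funext k
    by_cases hk : k ∈ L
    · have hTk : lam k * T = T * lam k :=
        Set.mem_centralizer_iff.mp hT (lam k) ⟨k, hk, rfl⟩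
      have hstep : T (b (k * t)) = lam k (T (b t)) := by
        rw [← hlam k t]
        have := congrArg (fun f : H →L[ℂ] H => f (b t)) hTk
        simpa using this.symm
      have hinner : ⟪b s, lam k (T (b t))⟫_ℂ = ⟪b (k⁻¹ * s), T (b t)⟫_ℂ := by
        rw [← hlam k⁻¹ s, ← hadj k, ContinuousLinearMap.adjoint_inner_left]
      rw [hstep, hinner, mul_comm]
    · rw [hcL k hk, mul_zero, zero_mul]
  rw [hterm] at hs1'
  exact hs2'.unique hs1'


end
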